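/- Let e₁ and e₂ be two distinct primitive integral future-pointing null vectors in V. Then the horoballs U_{e₁} and U_{e₂} are disjoint: there is no x ∈ C⁺ with B(x,e₁) ≤ (1/2)·√(B(x,x)) and B(x,e₂) ≤ (1/2)·√(B(x,x)). -/

import Mathlib

/-- The Minkowski bilinear form of signature `(1,n)` on `ℝ^{n+1}`:
`B x y = x₀ y₀ - ∑_{i=1}^n xᵢ yᵢ`. -/
def B (n : ℕ) (x y : Fin (n + 1) → ℝ) : ℝ :=
  x 0 * y 0 - ∑ i : Fin n, x i.succ * y i.succ

/-- The integral vector `z ∈ ℤ^{n+1}` viewed inside `V = ℝ^{n+1}`. -/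
def toReal (n : ℕ) (z : Fin (n + 1) → ℤ) : Fin (n + 1) → ℝ := fun i => (z i : ℝ)

/-- spatial inner product -/
def S (n : ℕ) (x y : Fin (n + 1) → ℝ) : ℝ := ∑ i : Fin n, x i.succ * y i.succ

lemma B_eq (n : ℕ) (x y : Fin (n+1) → ℝ) : B n x y = x 0 * y 0 - S n x y := rfl

lemma S_CS (n : ℕ) (x y : Fin (n+1) → ℝ) : (S n x y)^2 ≤ S n x x * S n y y := by
  have := Finset.sum_mul_sq_le_sq_mul_sq Finset.univ (fun i : Fin n => x i.succ)
    (fun i : Fin n => y i.succ)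
  simpa [S, pow_two] using this

lemma B_symm (n : ℕ) (x y : Fin (n+1) → ℝ) : B n x y = B n y x := by
  unfold B
  rw [Finset.sum_congr rfl (fun i _ => mul_comm (x i.succ) (y i.succ))]
  ring

lemma B_expand (n : ℕ) (x u v w : Fin (n+1) → ℝ) (a b : ℝ) :
    B n (fun i => x i - a * u i - b * v i) w
      = B n x w - a * B n u w - b * B n v w := by
  unfold B
  rw [Finset.sum_congr rfl (fun i (_ : i ∈ Finset.univ) =>
    show (x i.succ - a * u i.succ - b * v i.succ) * w i.succ
      = x i.succ * w i.succ - a * (u i.succ * w i.succ) - b * (v i.succ * w i.succ) by ring)]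
  rw [Finset.sum_sub_distrib, Finset.sum_sub_distrib, ← Finset.mul_sum, ← Finset.mul_sum]
  ring

/-- orthogonal to a future null vector implies nonpositive norm -/
lemma B_ortho_null (n : ℕ) (e y : Fin (n+1) → ℝ) (he : B n e e = 0) (he0 : 0 < e 0)
    (hy : B n y e = 0) : B n y y ≤ 0 := by
  have hcs := S_CS n y e
  have h1 : S n e e = e 0 * e 0 := by have := B_eq n e e; rw [he] at this; linarith
  have h2 : S n y e = y 0 * e 0 := by have := B_eq n y e; rw [hy] at this; linarith
  have hcs' : (y 0 * e 0)^2 ≤ S n y y * (e 0 * e 0) := by rw [← h1, ← h2]; exact hcs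
  rw [B_eq]
  nlinarith [hcs', mul_pos he0 he0]

lemma B_pos (n : ℕ) (e x : Fin (n+1) → ℝ) (he : B n e e = 0) (he0 : 0 < e 0)
    (hx : 0 < B n x x) (hx0 : 0 < x 0) : 0 < B n x e := by
  by_contra h
  push_neg at h
  have hcs := S_CS n x e
  have h1 : S n e e = e 0 * e 0 := by have := B_eq n e e; rw [he] at this; linarith
  have h2 : x 0 * e 0 ≤ S n x e := by have := B_eq n x e; linarith
  have h3 : x 0 * x 0 - S n x x > 0 := by have := B_eq n x x; linarith
  have hcs' : (S n x e)^2 ≤ S n x x * (e 0 * e 0) := by rw [← h1]; exact hcs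
  have h4 := mul_self_le_mul_self (le_of_lt (mul_pos hx0 he0)) h2
  nlinarith [mul_pos he0 he0]

lemma B_comb (n : ℕ) (u v w : Fin (n+1) → ℝ) (a b : ℝ) :
    B n (fun i => a * u i - b * v i) w = a * B n u w - b * B n v w := by
  unfold B
  rw [Finset.sum_congr rfl (fun i (_ : i ∈ Finset.univ) =>
    show (a * u i.succ - b * v i.succ) * w i.succ
      = a * (u i.succ * w i.succ) - b * (v i.succ * w i.succ) by ring)]
  rw [Finset.sum_sub_distrib, ← Finset.mul_sum, ← Finset.mul_sum]
  ring

/-- The horoballs `U_{e₁}` and `U_{e₂}` attached to two distinct primitive integral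
future-pointing null vectors are disjoint: no point `x` of the open positive cone
satisfies `B(x,eⱼ) ≤ (1/2)√(B(x,x))` for both `j = 1, 2`. -/
theorem horoballs_disjoint (n : ℕ) (hn : 1 ≤ n) (z₁ z₂ : Fin (n + 1) → ℤ)
    (hprim₁ : Finset.univ.gcd z₁ = 1) (hprim₂ : Finset.univ.gcd z₂ = 1)
    (hnull₁ : B n (toReal n z₁) (toReal n z₁) = 0)
    (hnull₂ : B n (toReal n z₂) (toReal n z₂) = 0)
    (hfut₁ : 0 < z₁ 0) (hfut₂ : 0 < z₂ 0)
    (hne : z₁ ≠ z₂) :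
    ¬ ∃ x : Fin (n + 1) → ℝ, (0 < B n x x ∧ 0 < x 0) ∧
      B n x (toReal n z₁) ≤ (1 / 2) * Real.sqrt (B n x x) ∧
      B n x (toReal n z₂) ≤ (1 / 2) * Real.sqrt (B n x x) := by
  rintro ⟨x, ⟨hq, hx0⟩, h1, h2⟩
  set e₁ := toReal n z₁ with hE₁
  set e₂ := toReal n z₂ with hE₂
  have he₁0 : 0 < e₁ 0 := by rw [hE₁]; unfold toReal; exact_mod_cast hfut₁
  have he₂0 : 0 < e₂ 0 := by rw [hE₂]; unfold toReal; exact_mod_cast hfut₂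
  set c := B n e₁ e₂ with hc_def
  -- c ≥ 0
  have hS₁ : S n e₁ e₁ = e₁ 0 * e₁ 0 := by have := B_eq n e₁ e₁; rw [hnull₁] at this; linarith
  have hS₂ : S n e₂ e₂ = e₂ 0 * e₂ 0 := by have := B_eq n e₂ e₂; rw [hnull₂] at this; linarith
  have hc0 : 0 ≤ c := by
    have hcs := S_CS n e₁ e₂
    rw [hS₁, hS₂] at hcs
    rw [hc_def, B_eq]
    nlinarith [mul_pos he₁0 he₂0]
  -- c ≠ 0
  have hcne : c ≠ 0 := by
    intro hc
    set y : Fin (n+1) → ℝ := fun i => e₂ 0 * e₁ i - e₁ 0 * e₂ i with hy_def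
    have hBe₁y : B n e₁ y = 0 := by
      rw [B_symm, hy_def, B_comb, hnull₁, B_symm n e₂ e₁, ← hc_def, hc]; ring
    have hBe₂y : B n e₂ y = 0 := by
      rw [B_symm, hy_def, B_comb, hnull₂, ← hc_def, hc]; ring
    have hByy : B n y y = 0 := by
      rw [hy_def, B_comb, ← hy_def, hBe₁y, hBe₂y]; ring
    have hy0 : y 0 = 0 := by rw [hy_def]; ring
    have hSyy : S n y y = 0 := by have := B_eq n y y; rw [hByy, hy0] at this; linarith
    have hzero : ∀ i ∈ Finset.univ, y (Fin.succ i) * y (Fin.succ i) = 0 := by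
      rw [← Finset.sum_eq_zero_iff_of_nonneg (fun i _ => mul_self_nonneg _)]
      exact hSyy
    have key : ∀ j : Fin (n+1), z₂ 0 * z₁ j = z₁ 0 * z₂ j := by
      intro j
      induction j using Fin.cases with
      | zero => ring
      | succ i =>
        have h := mul_self_eq_zero.mp (hzero i (Finset.mem_univ i))
        have hb : e₂ 0 * e₁ i.succ - e₁ 0 * e₂ i.succ = 0 := h
        have h' : (z₂ 0 : ℝ) * (z₁ i.succ : ℝ) = (z₁ 0 : ℝ) * (z₂ i.succ : ℝ) := by
          have : e₂ 0 * e₁ i.succ = e₁ 0 * e₂ i.succ := by linarith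
          exact this
        exact_mod_cast h'
    have g1 : (Finset.univ.gcd fun j => z₂ 0 * z₁ j) = z₂ 0 := by
      rw [Finset.gcd_mul_left, hprim₁, Int.normalize_of_nonneg hfut₂.le, mul_one]
    have g2 : (Finset.univ.gcd fun j => z₂ 0 * z₁ j) = z₁ 0 := by
      simp only [key]
      rw [Finset.gcd_mul_left, hprim₂, Int.normalize_of_nonneg hfut₁.le, mul_one]
    have hab : z₂ 0 = z₁ 0 := by rw [← g1, g2]
    apply hne
    funext j
    have := key j
    rw [hab] at this
    exact mul_left_cancel₀ (ne_of_gt hfut₁) this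
  have hcpos : 0 < c := lt_of_le_of_ne hc0 (Ne.symm hcne)
  -- c ≥ 1 by integrality
  have hc1 : 1 ≤ c := by
    have hm : ((z₁ 0 * z₂ 0 - ∑ i : Fin n, z₁ i.succ * z₂ i.succ : ℤ) : ℝ) = c := by
      rw [hc_def, hE₁, hE₂]; unfold B toReal; push_cast; ring
    have : (0:ℤ) < z₁ 0 * z₂ 0 - ∑ i : Fin n, z₁ i.succ * z₂ i.succ := by
      exact_mod_cast hm ▸ hcpos
    have : (1:ℤ) ≤ z₁ 0 * z₂ 0 - ∑ i : Fin n, z₁ i.succ * z₂ i.succ := this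
    calc (1:ℝ) ≤ ((z₁ 0 * z₂ 0 - ∑ i : Fin n, z₁ i.succ * z₂ i.succ : ℤ) : ℝ) := by
          exact_mod_cast this
      _ = c := hm
  -- positivity of B x eⱼ
  set p₁ := B n x e₁ with hp₁_def
  set p₂ := B n x e₂ with hp₂_def
  have hp₁ : 0 < p₁ := B_pos n e₁ x hnull₁ he₁0 hq hx0
  have hp₂ : 0 < p₂ := B_pos n e₂ x hnull₂ he₂0 hq hx0
  -- the projected vector
  set y : Fin (n+1) → ℝ := fun i => x i - (p₂/c) * e₁ i - (p₁/c) * e₂ i with hy_def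
  have hye₁ : B n y e₁ = 0 := by
    rw [hy_def, B_expand, ← hp₁_def, hnull₁, B_symm n e₂ e₁, ← hc_def]
    field_simp
    ring
  have hye₂ : B n y e₂ = 0 := by
    rw [hy_def, B_expand, ← hp₂_def, hnull₂, ← hc_def]
    field_simp
    ring
  have hyy : B n y y ≤ 0 := B_ortho_null n e₁ y hnull₁ he₁0 hye₁
  have hyval : B n y y = B n x x - (p₂/c) * p₁ - (p₁/c) * p₂ := by
    rw [hy_def, B_expand, ← hy_def, B_symm n x y, hy_def, B_expand, ← hy_def,
      B_symm n e₁ y, B_symm n e₂ y, hye₁, hye₂, B_symm n e₁ x, B_symm n e₂ x,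
      ← hp₁_def, ← hp₂_def]
    ring
  -- conclude
  have hsq : Real.sqrt (B n x x) ^ 2 = B n x x := Real.sq_sqrt hq.le
  have hsnn : 0 ≤ Real.sqrt (B n x x) := Real.sqrt_nonneg _
  have hprod : p₁ * p₂ ≤ B n x x / 4 := by
    have hmul := mul_le_mul h1 h2 hp₂.le
      (by positivity : (0:ℝ) ≤ 1 / 2 * Real.sqrt (B n x x))
    nlinarith [hmul, hsq]
  have hq2 : B n x x * c ≤ 2 * p₁ * p₂ := by
    have : B n x x ≤ (p₂/c) * p₁ + (p₁/c) * p₂ := by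
      have h := hyy; rw [hyval] at h; linarith
    have h' := mul_le_mul_of_nonneg_right this hcpos.le
    calc B n x x * c ≤ ((p₂/c) * p₁ + (p₁/c) * p₂) * c := h'
      _ = 2 * p₁ * p₂ := by field_simp; ring
  have hfin := mul_le_mul_of_nonneg_left hc1 hq.le
  rw [mul_one] at hfin
  linarith
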